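/- Let m₁ and m₂ be relatively prime natural numbers with m₁+m₂ odd. Then the rhodonea curve ρ^{(m)}_α has minimal period 2π, and for t ∈ [0,2π) the set S^{(m)}(t) = {s ∈ [0,2π) : ρ^{(m)}_α(s) = ρ^{(m)}_α(t)} satisfies: (i) #S^{(m)}(t) = 2m₂ if t = t^{(m)}_l for some l ∈ {0,…,4m₁m₂−1} with l ≡ m₁ (mod 2m₁); (ii) #S^{(m)}(t) = 2 if t = t^{(m)}_l for some l ∈ {0,…,4m₁m₂−1} with l ≢ 0 (mod m₁); (iii) #S^{(m)}(t) = 1 for all other t ∈ [0,2π). -/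

import Mathlib

noncomputable section

/-- The rhodonea curve `ρ^{(m)}_α`. -/
def rho (m₁ m₂ : ℕ) (α : ℝ) (t : ℝ) : ℝ × ℝ :=
  (Real.cos (m₂ * t) * Real.cos (m₁ * t - α * Real.pi),
   Real.cos (m₂ * t) * Real.sin (m₁ * t - α * Real.pi))

/-- The sampling parameters `t^{(m)}_l = l π / (2 m₁ m₂)`. -/
def tSample (m₁ m₂ : ℕ) (l : ℕ) : ℝ := l * Real.pi / (2 * m₁ * m₂)

/-- The set `S^{(m)}(t)` of parameters in `[0, 2π)` hitting the same point as `t`. -/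
def Sset (m₁ m₂ : ℕ) (α t : ℝ) : Set ℝ :=
  {s | s ∈ Set.Ico (0 : ℝ) (2 * Real.pi) ∧ rho m₁ m₂ α s = rho m₁ m₂ α t}

/-- The sample point set `LS^{(m)}_α` along the rhodonea curve. -/
def LSa (m₁ m₂ : ℕ) (α : ℝ) : Set (ℝ × ℝ) :=
  {p | ∃ l : ℕ, l < 4 * m₁ * m₂ ∧ p = rho m₁ m₂ α (tSample m₁ m₂ l)}

/-- The nodal index set `I^{(m)}` as a set. -/
def Idx (m₁ m₂ : ℕ) : Set (ℤ × ℤ) :=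
  {i | 0 ≤ i.1 ∧ i.1 ≤ (m₁ : ℤ) ∧ -(2 * (m₂ : ℤ)) < i.2 ∧ i.2 ≤ 2 * (m₂ : ℤ) ∧
       (i.1 = (m₁ : ℤ) → i.2 ≤ 0) ∧ Even (i.1 + i.2)}

/-- The nodal index set `I^{(m)}` as a finset. -/
def IdxF (m₁ m₂ : ℕ) : Finset (ℤ × ℤ) :=
  (Finset.Icc (0 : ℤ) (m₁ : ℤ) ×ˢ Finset.Ioc (-(2 * (m₂ : ℤ))) (2 * (m₂ : ℤ))).filter
    (fun i => (i.1 = (m₁ : ℤ) → i.2 ≤ 0) ∧ Even (i.1 + i.2))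

/-- Radial coordinate `r^{(m₁)}_{i₁} = cos(i₁ π / (2 m₁))`. -/
def rI (m₁ : ℕ) (i₁ : ℤ) : ℝ := Real.cos (i₁ * Real.pi / (2 * m₁))

/-- Angular coordinate `θ^{(m₂)}_{i₂} = i₂ π / (2 m₂)`. -/
def thetaI (m₂ : ℕ) (i₂ : ℤ) : ℝ := i₂ * Real.pi / (2 * m₂)

/-- The rhodonea node `x^{(m)}_i` in Cartesian coordinates. -/
def node (m₁ m₂ : ℕ) (i : ℤ × ℤ) : ℝ × ℝ :=
  (rI m₁ i.1 * Real.cos (thetaI m₂ i.2), rI m₁ i.1 * Real.sin (thetaI m₂ i.2))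

/-- The rhodonea node set `LS^{(m)}`. -/
def LS (m₁ m₂ : ℕ) : Set (ℝ × ℝ) := node m₁ m₂ '' Idx m₁ m₂

/-- Chebyshev polynomial of the first kind, `T_n(r) = cos(n arccos r)`. -/
def chebT (n : ℕ) (r : ℝ) : ℝ := Real.cos (n * Real.arccos r)

/-- The closed unit disk `𝔻 ⊆ ℝ²`. -/
def closedDisk : Set (ℝ × ℝ) := {x | x.1 ^ 2 + x.2 ^ 2 ≤ 1}

/-- The weights `w^{(m)}_i`. -/
def wgt (m₁ m₂ : ℕ) (i : ℤ × ℤ) : ℝ :=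
  if i.1 = 0 then 1 / (4 * m₁ * m₂) else 2 / (4 * m₁ * m₂)

/-- The discrete basis functions `χ^{(m)}_γ(i)`. -/
def chi (m₁ m₂ : ℕ) (γ i : ℤ × ℤ) : ℂ :=
  (Real.cos (γ.1 * i.1 * Real.pi / (2 * m₁)) : ℂ) *
    Complex.exp (Complex.I * (γ.2 * i.2 * Real.pi / (2 * m₂)))

/-- The discrete inner product `⟨f, g⟩_w` on `L(I^{(m)})`. -/
def innerW (m₁ m₂ : ℕ) (f g : ℤ × ℤ → ℂ) : ℂ :=
  ∑ i ∈ IdxF m₁ m₂, (wgt m₁ m₂ i : ℂ) * f i * (starRingEnd ℂ) (g i)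

/-- The rectangular spectral index set `Γ^{(m)}_□`. -/
def GammaSq (m₁ m₂ : ℕ) : Finset (ℤ × ℤ) :=
  (Finset.Icc (0 : ℤ) (2 * (m₁ : ℤ)) ×ˢ Finset.Ioc (-(m₂ : ℤ)) (m₂ : ℤ)).filter
    (fun γ => Even (γ.1 + γ.2))

/-- The full frequency box `K^{(m)}`. -/
def KSet (m₁ m₂ : ℕ) : Finset (ℤ × ℤ) :=
  Finset.Icc (0 : ℤ) (2 * (m₁ : ℤ)) ×ˢ Finset.Ioc (-(2 * (m₂ : ℤ))) (2 * (m₂ : ℤ))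

/-- The flip (glide-reflection) operator `γ ↦ γ*` on `K^{(m)}`, with second
coordinate `(γ₂ + 2m₂) mod 4m₂` taken in `(-2m₂, 2m₂]`. -/
def flipOp (m₁ m₂ : ℕ) (γ : ℤ × ℤ) : ℤ × ℤ :=
  (2 * (m₁ : ℤ) - γ.1, if γ.2 ≤ 0 then γ.2 + 2 * (m₂ : ℤ) else γ.2 - 2 * (m₂ : ℤ))

/-- `Γ` is a spectral index set for `I^{(m)}`: a subset of `K^{(m)}` satisfying the
parity condition whose functions `χ^{(m)}_γ` form an orthogonal basis of `L(I^{(m)})`. -/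
def IsSpectral (m₁ m₂ : ℕ) (Γ : Finset (ℤ × ℤ)) : Prop :=
  Γ ⊆ KSet m₁ m₂ ∧ (∀ γ ∈ Γ, Even (γ.1 + γ.2)) ∧
  (∀ γ ∈ Γ, ∀ γ' ∈ Γ, γ ≠ γ' → innerW m₁ m₂ (chi m₁ m₂ γ) (chi m₁ m₂ γ') = 0) ∧
  LinearIndependent ℂ (fun γ : ↥Γ => fun i : ↥(IdxF m₁ m₂) => chi m₁ m₂ γ.1 i.1) ∧
  Submodule.span ℂ
    (Set.range (fun γ : ↥Γ => fun i : ↥(IdxF m₁ m₂) => chi m₁ m₂ γ.1 i.1)) = ⊤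

/-- The real discrete basis functions `χ^{(m)}_{ℛ,γ}(i)` (for `γ ∈ Γ`). -/
def chiR (m₁ m₂ : ℕ) (Γ : Finset (ℤ × ℤ)) (γ i : ℤ × ℤ) : ℝ :=
  Real.cos (γ.1 * i.1 * Real.pi / (2 * m₁)) *
    (if ((γ.1, -γ.2) ∈ Γ ∧ 0 ≤ γ.2) ∨ ((γ.1, -γ.2) ∉ Γ ∧ γ.1 ≤ (m₁ : ℤ))
     then Real.cos (γ.2 * i.2 * Real.pi / (2 * m₂))
     else Real.sin (γ.2 * i.2 * Real.pi / (2 * m₂)))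

/-- The Chebyshev–Fourier basis functions `X_γ(r, θ) = T_{γ₁}(r) e^{i γ₂ θ}`. -/
def Xfun (γ : ℤ × ℤ) (p : ℝ × ℝ) : ℂ :=
  (Real.cos (γ.1 * Real.arccos p.1) : ℂ) * Complex.exp (Complex.I * (γ.2 * p.2))

/-- The real Chebyshev–Fourier basis functions `X_{ℛ,γ}` (for `γ ∈ Γ`). -/
def XRfun (m₁ : ℕ) (Γ : Finset (ℤ × ℤ)) (γ : ℤ × ℤ) (p : ℝ × ℝ) : ℝ :=
  Real.cos (γ.1 * Real.arccos p.1) *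
    (if ((γ.1, -γ.2) ∈ Γ ∧ 0 ≤ γ.2) ∨ ((γ.1, -γ.2) ∉ Γ ∧ γ.1 ≤ (m₁ : ℤ))
     then Real.cos (γ.2 * p.2) else Real.sin (γ.2 * p.2))

/-- The Lagrange functions `L^{(m)}_i`. -/
def Lag (m₁ m₂ : ℕ) (Γ : Finset (ℤ × ℤ)) (i : ℤ × ℤ) (p : ℝ × ℝ) : ℂ :=
  (wgt m₁ m₂ i : ℂ) *
    ∑ γ ∈ Γ, ((starRingEnd ℂ) (chi m₁ m₂ γ i) /
      innerW m₁ m₂ (chi m₁ m₂ γ) (chi m₁ m₂ γ)) * Xfun γ p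

/-- The complex-valued version of `X_{ℛ,γ}`. -/
def XRc (m₁ : ℕ) (Γ : Finset (ℤ × ℤ)) (γ : ℤ × ℤ) (p : ℝ × ℝ) : ℂ :=
  (XRfun m₁ Γ γ p : ℂ)

/-- The real Lagrange functions `L^{(m)}_{ℛ,i}`. -/
def LagR (m₁ m₂ : ℕ) (Γ : Finset (ℤ × ℤ)) (i : ℤ × ℤ) (p : ℝ × ℝ) : ℂ :=
  (wgt m₁ m₂ i : ℂ) *
    ∑ γ ∈ Γ, ((chiR m₁ m₂ Γ γ i /
        (∑ j ∈ IdxF m₁ m₂, wgt m₁ m₂ j * chiR m₁ m₂ Γ γ j ^ 2) : ℝ) : ℂ) * XRc m₁ Γ γ p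

end

namespace Rh
open Real Complex

/-- congruence mod `2π` -/
def ceq (x y : ℝ) : Prop := ∃ k : ℤ, x = y + k * (2 * Real.pi)

lemma ceq_refl (x : ℝ) : ceq x x := ⟨0, by simp⟩
lemma ceq_symm {x y : ℝ} (h : ceq x y) : ceq y x := by
  obtain ⟨k, h⟩ := h; exact ⟨-k, by rw [h]; push_cast; ring⟩
lemma ceq_trans {x y z : ℝ} (h : ceq x y) (h' : ceq y z) : ceq x z := by
  obtain ⟨k, h⟩ := h; obtain ⟨k', h'⟩ := h'
  exact ⟨k + k', by rw [h, h']; push_cast; ring⟩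

lemma exp_I_eq_iff {x y : ℝ} :
    Complex.exp (Complex.I * x) = Complex.exp (Complex.I * y) ↔ ceq x y := by
  rw [Complex.exp_eq_exp_iff_exists_int]
  constructor
  · rintro ⟨n, h⟩
    refine ⟨n, ?_⟩
    have h2 : Complex.I * (x:ℂ) = Complex.I * ((y:ℂ) + (n:ℂ)*(2*Real.pi)) := by
      rw [h]; ring
    have := mul_left_cancel₀ Complex.I_ne_zero h2
    exact_mod_cast this
  · rintro ⟨k, h⟩
    exact ⟨k, by rw [h]; push_cast; ring⟩

/-- abbreviations for the two frequencies -/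
def pr (m₁ m₂ : ℕ) : ℝ := (m₁:ℝ) + m₂
def qr (m₁ m₂ : ℕ) : ℝ := (m₁:ℝ) - m₂

/-- The key complex function -/
noncomputable def F (m₁ m₂ : ℕ) (t : ℝ) : ℂ :=
  Complex.exp (Complex.I * ((pr m₁ m₂ * t : ℝ))) +
    Complex.exp (Complex.I * ((qr m₁ m₂ * t : ℝ)))

lemma F_eq (m₁ m₂ : ℕ) (t : ℝ) :
    F m₁ m₂ t = 2 * (Real.cos (m₂*t) : ℂ) * Complex.exp (Complex.I * (((m₁:ℝ)*t : ℝ))) := by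
  rw [F, pr, qr, Complex.ofReal_cos, Complex.cos]
  rw [show (Complex.I * ((((m₁:ℝ)+m₂) * t : ℝ))) =
      Complex.I * (((m₁:ℝ)*t : ℝ)) + (((m₂:ℝ)*t : ℝ):ℂ) * Complex.I by push_cast; ring,
    show (Complex.I * ((((m₁:ℝ)-m₂) * t : ℝ))) =
      Complex.I * (((m₁:ℝ)*t : ℝ)) + -((((m₂:ℝ)*t : ℝ)):ℂ) * Complex.I by push_cast; ring,
    Complex.exp_add, Complex.exp_add]
  ring

lemma g_eval (c x : ℝ) :
    ((c * Real.cos x : ℝ) : ℂ) + ((c * Real.sin x : ℝ) : ℂ) * Complex.I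
      = (c:ℂ) * Complex.exp (Complex.I * (x:ℂ)) := by
  rw [mul_comm Complex.I, Complex.exp_mul_I, ← Complex.ofReal_cos, ← Complex.ofReal_sin]
  push_cast; ring

lemma prod_eq_iff_complex (a b c d : ℝ) :
    ((a,b) : ℝ×ℝ) = (c,d) ↔ ((a:ℂ) + (b:ℂ)*Complex.I = (c:ℂ) + (d:ℂ)*Complex.I) := by
  rw [Prod.mk.injEq]
  constructor
  · rintro ⟨h1,h2⟩; rw [h1,h2]
  · intro h
    constructor
    · have := congrArg Complex.re h; simpa using this
    · have := congrArg Complex.im h; simpa using this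

lemma exp_split (x y : ℝ) :
    Complex.exp (Complex.I * ((x - y : ℝ))) = Complex.exp (Complex.I * (x:ℝ)) *
      Complex.exp (Complex.I * ((-y : ℝ))) := by
  rw [← Complex.exp_add]; congr 1; push_cast; ring

lemma rho_eq_iff (m₁ m₂ : ℕ) (α s t : ℝ) :
    rho m₁ m₂ α s = rho m₁ m₂ α t ↔ F m₁ m₂ s = F m₁ m₂ t := by
  have hsplit : ∀ u : ℝ, Complex.exp (Complex.I * ((m₁*u - α*Real.pi : ℝ)))
      = Complex.exp (Complex.I * (((m₁:ℝ)*u : ℝ))) *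
        Complex.exp (Complex.I * ((-(α*Real.pi) : ℝ))) := fun u => exp_split _ _
  have hne : Complex.exp (Complex.I * ((-(α*Real.pi) : ℝ))) ≠ 0 := Complex.exp_ne_zero _
  rw [rho, rho, prod_eq_iff_complex, g_eval, g_eval, F_eq, F_eq, hsplit, hsplit]
  constructor
  · intro h
    have h2 := mul_right_cancel₀ hne (show
      ((Real.cos (m₂*s) : ℝ) : ℂ) * Complex.exp (Complex.I * (((m₁:ℝ)*s : ℝ))) *
        Complex.exp (Complex.I * ((-(α*Real.pi) : ℝ)))
      = ((Real.cos (m₂*t) : ℝ) : ℂ) * Complex.exp (Complex.I * (((m₁:ℝ)*t : ℝ))) *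
        Complex.exp (Complex.I * ((-(α*Real.pi) : ℝ))) by linear_combination h)
    linear_combination 2 * h2
  · intro h
    linear_combination (Complex.exp (Complex.I * ((-(α*Real.pi) : ℝ))) / 2) * h

lemma pair_eq {a b c d : ℂ} (ha : ‖a‖ = 1) (hb : ‖b‖ = 1)
    (hc : ‖c‖ = 1) (hd : ‖d‖ = 1) (h : a + b = c + d) :
    (a = c ∧ b = d) ∨ (a = d ∧ b = c) ∨ (b = -a ∧ d = -c) := by
  by_cases hab : a + b = 0
  · right; right
    have hcd : c + d = 0 := by rw [← h]; exact hab
    exact ⟨by linear_combination hab, by linear_combination hcd⟩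
  · have ha0 : a ≠ 0 := by intro h0; rw [h0] at ha; simp at ha
    have hb0 : b ≠ 0 := by intro h0; rw [h0] at hb; simp at hb
    have hc0 : c ≠ 0 := by intro h0; rw [h0] at hc; simp at hc
    have hd0 : d ≠ 0 := by intro h0; rw [h0] at hd; simp at hd
    have hconj := congrArg (starRingEnd ℂ) h
    simp only [map_add] at hconj
    rw [← Complex.inv_eq_conj ha, ← Complex.inv_eq_conj hb, ← Complex.inv_eq_conj hc,
      ← Complex.inv_eq_conj hd] at hconj
    have habcd : a * b = c * d := by
      have h1 : (a + b) * (c * d) = (c + d) * (a * b) := by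
        field_simp at hconj
        linear_combination hconj
      rw [← h] at h1
      exact mul_left_cancel₀ hab h1.symm
    have hz : (c - a) * (c - b) = 0 := by linear_combination (-c) * h + habcd
    rcases mul_eq_zero.1 hz with h1 | h1
    · left
      have hca : c = a := sub_eq_zero.1 h1
      exact ⟨hca.symm, by linear_combination h + hca⟩
    · right; left
      have hcb : c = b := sub_eq_zero.1 h1
      exact ⟨by linear_combination h + hcb, hcb.symm⟩

section Main
variable (m₁ m₂ : ℕ)

def E1 (s t : ℝ) : Prop := ceq (pr m₁ m₂ * s) (pr m₁ m₂ * t) ∧ ceq (qr m₁ m₂ * s) (qr m₁ m₂ * t)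
def E2 (s t : ℝ) : Prop := ceq (pr m₁ m₂ * s) (qr m₁ m₂ * t) ∧ ceq (qr m₁ m₂ * s) (pr m₁ m₂ * t)

lemma abs_exp_I_real (x : ℝ) : ‖Complex.exp (Complex.I * x)‖ = 1 := by
  rw [mul_comm]; exact Complex.norm_exp_ofReal_mul_I x

lemma cos_zero_of_F_zero {t : ℝ} (h : F m₁ m₂ t = 0) : Real.cos (m₂ * t) = 0 := by
  rw [F_eq] at h
  rcases mul_eq_zero.1 h with h1 | h1
  · rcases mul_eq_zero.1 h1 with h2 | h2
    · norm_num at h2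
    · exact_mod_cast h2
  · exact absurd h1 (Complex.exp_ne_zero _)

lemma F_zero_of_cos_zero {t : ℝ} (h : Real.cos (m₂ * t) = 0) : F m₁ m₂ t = 0 := by
  rw [F_eq, h]; simp

lemma rho_eq_iff' (α s t : ℝ) :
    rho m₁ m₂ α s = rho m₁ m₂ α t ↔
      (E1 m₁ m₂ s t ∨ E2 m₁ m₂ s t ∨ (Real.cos (m₂*s) = 0 ∧ Real.cos (m₂*t) = 0)) := by
  rw [rho_eq_iff]
  constructor
  · intro h
    have hp := pair_eq (abs_exp_I_real ((pr m₁ m₂) * s)) (abs_exp_I_real ((qr m₁ m₂) * s))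
      (abs_exp_I_real ((pr m₁ m₂) * t)) (abs_exp_I_real ((qr m₁ m₂) * t)) h
    rcases hp with ⟨h1, h2⟩ | ⟨h1, h2⟩ | ⟨h1, h2⟩
    · exact Or.inl ⟨exp_I_eq_iff.1 h1, exp_I_eq_iff.1 h2⟩
    · exact Or.inr (Or.inl ⟨exp_I_eq_iff.1 h1, exp_I_eq_iff.1 h2⟩)
    · refine Or.inr (Or.inr ⟨?_, ?_⟩)
      · exact cos_zero_of_F_zero m₁ m₂ (by rw [F]; show _ + _ = 0; rw [h1]; ring)
      · exact cos_zero_of_F_zero m₁ m₂ (by rw [F]; show _ + _ = 0; rw [h2]; ring)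
  · rintro (⟨h1, h2⟩ | ⟨h1, h2⟩ | ⟨h1, h2⟩)
    · rw [F, F, exp_I_eq_iff.2 h1, exp_I_eq_iff.2 h2]
    · rw [F, F, exp_I_eq_iff.2 h1, exp_I_eq_iff.2 h2]; ring
    · rw [F_zero_of_cos_zero m₁ m₂ h1, F_zero_of_cos_zero m₁ m₂ h2]

lemma pr_cast : pr m₁ m₂ = (((m₁:ℤ) + m₂ : ℤ) : ℝ) := by rw [pr]; push_cast; ring
lemma qr_cast : qr m₁ m₂ = (((m₁:ℤ) - m₂ : ℤ) : ℝ) := by rw [qr]; push_cast; ring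

lemma ceq_mul {x y : ℝ} (n : ℤ) (h : ceq x y) : ceq ((n:ℝ)*x) ((n:ℝ)*y) := by
  obtain ⟨k, hk⟩ := h
  exact ⟨n*k, by rw [hk]; push_cast; ring⟩

lemma cop_PQ (hcop : Nat.Coprime m₁ m₂) (hodd : Odd (m₁+m₂)) :
    IsCoprime ((m₁:ℤ)+m₂) ((m₁:ℤ)-m₂) := by
  rw [Int.isCoprime_iff_gcd_eq_one]
  set g := Int.gcd ((m₁:ℤ)+m₂) ((m₁:ℤ)-m₂) with hg
  have hd1 : (g:ℤ) ∣ ((2*m₁ : ℕ) : ℤ) := by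
    have := dvd_add (Int.gcd_dvd_left (a := (m₁:ℤ)+m₂) (b := (m₁:ℤ)-m₂))
      (Int.gcd_dvd_right (a := (m₁:ℤ)+m₂) (b := (m₁:ℤ)-m₂))
    rw [show ((m₁:ℤ)+m₂) + ((m₁:ℤ)-m₂) = ((2*m₁ : ℕ) : ℤ) by push_cast; ring] at this
    exact this
  have hd2 : (g:ℤ) ∣ ((2*m₂ : ℕ) : ℤ) := by
    have := dvd_sub (Int.gcd_dvd_left (a := (m₁:ℤ)+m₂) (b := (m₁:ℤ)-m₂))
      (Int.gcd_dvd_right (a := (m₁:ℤ)+m₂) (b := (m₁:ℤ)-m₂))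
    rw [show ((m₁:ℤ)+m₂) - ((m₁:ℤ)-m₂) = ((2*m₂ : ℕ) : ℤ) by push_cast; ring] at this
    exact this
  have hd1' : g ∣ 2*m₁ := Int.ofNat_dvd.1 hd1
  have hd2' : g ∣ 2*m₂ := Int.ofNat_dvd.1 hd2
  have hdvd2 : g ∣ 2 := by
    have := Nat.dvd_gcd hd1' hd2'
    rwa [Nat.gcd_mul_left, Nat.Coprime.gcd_eq_one hcop, mul_one] at this
  have hgodd : ¬ (2 ∣ g) := by
    intro h2
    have : (2:ℤ) ∣ ((m₁:ℤ)+m₂) := dvd_trans (by have := Int.ofNat_dvd.2 h2; exact this) (Int.gcd_dvd_left ((m₁:ℤ)+m₂) ((m₁:ℤ)-m₂))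
    rw [show ((m₁:ℤ)+m₂) = ((m₁+m₂ : ℕ) : ℤ) by push_cast; ring] at this
    have heven : 2 ∣ (m₁ + m₂) := Int.ofNat_dvd.1 this
    exact (Nat.not_even_iff_odd.2 hodd) (even_iff_two_dvd.2 heven)
  rcases (Nat.dvd_prime Nat.prime_two).1 hdvd2 with h | h
  · exact h
  · rw [h] at hgodd; exact absurd (dvd_refl 2) hgodd

lemma sys_unique (hm₁ : 0 < m₁) (hcop : Nat.Coprime m₁ m₂) (hodd : Odd (m₁ + m₂)) {s t : ℝ}
    (h1 : ceq (pr m₁ m₂ * s) (pr m₁ m₂ * t)) (h2 : ceq (qr m₁ m₂ * s) (qr m₁ m₂ * t)) :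
    ceq s t := by
  obtain ⟨a, ha⟩ := h1
  obtain ⟨b, hb⟩ := h2
  rw [pr] at ha; rw [qr] at hb
  have hπ : (0:ℝ) < 2 * Real.pi := Real.two_pi_pos
  have hkey : ((m₁:ℤ)-m₂) * a = ((m₁:ℤ)+m₂) * b := by
    have h3 : ((((m₁:ℤ)-m₂) * a : ℤ) : ℝ) * (2*Real.pi) = ((((m₁:ℤ)+m₂) * b : ℤ) : ℝ) * (2*Real.pi) := by
      push_cast
      linear_combination ((m₁:ℝ)+m₂) * hb - ((m₁:ℝ)-m₂) * ha
    exact_mod_cast mul_right_cancel₀ (ne_of_gt hπ) h3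
  have hP : ((m₁:ℤ)+m₂) ∣ a := by
    refine (cop_PQ m₁ m₂ hcop hodd).dvd_of_dvd_mul_right ?_
    exact ⟨b, by linear_combination hkey⟩
  obtain ⟨c, hc⟩ := hP
  refine ⟨c, ?_⟩
  have hpne : ((m₁:ℝ)+m₂) ≠ 0 := by positivity
  apply mul_left_cancel₀ hpne
  rw [ha, hc]
  push_cast
  ring

lemma E2_necessary {s t : ℝ} (h : E2 m₁ m₂ s t) : ∃ c : ℤ, 2*(m₁:ℝ)*m₂*t = c*Real.pi := by
  obtain ⟨⟨a, ha⟩, ⟨b, hb⟩⟩ := h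
  rw [pr, qr] at ha hb
  refine ⟨a*((m₁:ℤ)-m₂) - b*((m₁:ℤ)+m₂), ?_⟩
  push_cast
  linear_combination (((m₁:ℝ)-m₂)/2) * ha - (((m₁:ℝ)+m₂)/2) * hb

lemma E2_exists (hcop : Nat.Coprime m₁ m₂) (hodd : Odd (m₁ + m₂)) {t : ℝ} {l : ℤ}
    (hl : 2*(m₁:ℝ)*m₂*t = l*Real.pi) : ∃ s₀ : ℝ, E2 m₁ m₂ s₀ t := by
  obtain ⟨u, v, huv⟩ := cop_PQ m₁ m₂ hcop hodd
  have huvR : (u:ℝ)*((m₁:ℝ)+m₂) + (v:ℝ)*((m₁:ℝ)-m₂) = 1 := by exact_mod_cast huv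
  refine ⟨((u*((m₁:ℤ)-m₂) + v*((m₁:ℤ)+m₂) : ℤ) : ℝ) * t, ⟨v*l, ?_⟩, ⟨-(u*l), ?_⟩⟩
  · rw [pr, qr]
    push_cast
    linear_combination (t*((m₁:ℝ)-m₂)) * huvR + (2*(v:ℝ)) * hl
  · rw [pr, qr]
    push_cast
    linear_combination (t*((m₁:ℝ)+m₂)) * huvR + (-2*(u:ℝ)) * hl

lemma E2_unique (hm₁ : 0 < m₁) (hcop : Nat.Coprime m₁ m₂) (hodd : Odd (m₁ + m₂)) {s s' t : ℝ}
    (h : E2 m₁ m₂ s t) (h' : E2 m₁ m₂ s' t) : ceq s s' :=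
  sys_unique m₁ m₂ hm₁ hcop hodd (ceq_trans h.1 (ceq_symm h'.1)) (ceq_trans h.2 (ceq_symm h'.2))

lemma E2_of_ceq {s s' t : ℝ} (hss : ceq s s') (h : E2 m₁ m₂ s' t) : E2 m₁ m₂ s t := by
  constructor
  · refine ceq_trans ?_ h.1
    have := ceq_mul ((m₁:ℤ)+m₂) hss
    rwa [← pr_cast] at this
  · refine ceq_trans ?_ h.2
    have := ceq_mul ((m₁:ℤ)-m₂) hss
    rwa [← qr_cast] at this

end Main

/-- reduction to `[0, 2π)` -/
noncomputable def red (x : ℝ) : ℝ := toIcoMod Real.two_pi_pos 0 x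

lemma red_mem (x : ℝ) : red x ∈ Set.Ico 0 (2*Real.pi) := by
  have := toIcoMod_mem_Ico Real.two_pi_pos 0 x
  rwa [zero_add] at this

lemma ceq_red (x : ℝ) : ceq (red x) x := by
  refine ⟨-(toIcoDiv Real.two_pi_pos 0 x), ?_⟩
  rw [red, toIcoMod, zsmul_eq_mul]
  push_cast
  ring

lemma eq_red_iff {s x : ℝ} : (s ∈ Set.Ico 0 (2*Real.pi) ∧ ceq s x) ↔ s = red x := by
  constructor
  · rintro ⟨hs, ⟨k, hk⟩⟩
    have h1 : toIcoMod Real.two_pi_pos 0 s = s := by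
      rw [toIcoMod_eq_self]
      rwa [zero_add]
    have h2 : toIcoMod Real.two_pi_pos 0 s = toIcoMod Real.two_pi_pos 0 x := by
      rw [toIcoMod_eq_toIcoMod]
      exact ⟨-k, by rw [hk, zsmul_eq_mul]; push_cast; ring⟩
    rw [← h1, h2]; rfl
  · rintro rfl
    exact ⟨red_mem x, ceq_red x⟩

section SetChar
variable (m₁ m₂ : ℕ)

lemma cos_zero_add_int_pi {x : ℝ} (h : Real.cos x = 0) (k : ℤ) :
    Real.cos ((k:ℝ)*Real.pi + x) = 0 := by
  rw [Real.cos_add, Real.sin_int_mul_pi, h]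
  ring

lemma S_one (hm₁ : 0 < m₁) (hcop : Nat.Coprime m₁ m₂) (hodd : Odd (m₁ + m₂)) (α : ℝ) {t : ℝ}
    (ht : t ∈ Set.Ico (0:ℝ) (2*Real.pi)) (hc : Real.cos (m₂*t) ≠ 0)
    (hE2 : ∀ s, E2 m₁ m₂ s t → ceq s t) :
    Sset m₁ m₂ α t = {t} := by
  have hteq : t = red t := eq_red_iff.1 ⟨ht, ceq_refl t⟩
  ext s
  simp only [Sset, Set.mem_setOf_eq, Set.mem_singleton_iff]
  constructor
  · rintro ⟨hs, hrho⟩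
    rcases (rho_eq_iff' m₁ m₂ α s t).1 hrho with h | h | h
    · rw [eq_red_iff.1 ⟨hs, sys_unique m₁ m₂ hm₁ hcop hodd h.1 h.2⟩, ← hteq]
    · rw [eq_red_iff.1 ⟨hs, hE2 s h⟩, ← hteq]
    · exact absurd h.2 hc
  · rintro rfl
    exact ⟨ht, rfl⟩

lemma S_two (hm₁ : 0 < m₁) (hcop : Nat.Coprime m₁ m₂) (hodd : Odd (m₁ + m₂)) (α : ℝ) {t s₀ : ℝ}
    (ht : t ∈ Set.Ico (0:ℝ) (2*Real.pi)) (hc : Real.cos (m₂*t) ≠ 0)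
    (hs₀ : E2 m₁ m₂ s₀ t) (hnd : ¬ ceq (pr m₁ m₂ * t) (qr m₁ m₂ * t)) :
    Sset m₁ m₂ α t = {t, red s₀} ∧ t ≠ red s₀ := by
  have hteq : t = red t := eq_red_iff.1 ⟨ht, ceq_refl t⟩
  have hts₀ : ¬ ceq t s₀ := fun hts => hnd (E2_of_ceq m₁ m₂ hts hs₀).1
  constructor
  · ext s
    simp only [Sset, Set.mem_setOf_eq, Set.mem_insert_iff, Set.mem_singleton_iff]
    constructor
    · rintro ⟨hs, hrho⟩
      rcases (rho_eq_iff' m₁ m₂ α s t).1 hrho with h | h | h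
      · left
        rw [eq_red_iff.1 ⟨hs, sys_unique m₁ m₂ hm₁ hcop hodd h.1 h.2⟩, ← hteq]
      · right
        exact eq_red_iff.1 ⟨hs, E2_unique m₁ m₂ hm₁ hcop hodd h hs₀⟩
      · exact absurd h.2 hc
    · rintro (rfl | rfl)
      · exact ⟨ht, rfl⟩
      · exact ⟨red_mem s₀, (rho_eq_iff' m₁ m₂ α _ t).2
          (Or.inr (Or.inl (E2_of_ceq m₁ m₂ (ceq_red s₀) hs₀)))⟩
  · intro h
    exact hts₀ (h ▸ ceq_red s₀)

lemma S_origin (α : ℝ) {t : ℝ} (hc : Real.cos (m₂*t) = 0) :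
    Sset m₁ m₂ α t = {s : ℝ | s ∈ Set.Ico (0:ℝ) (2*Real.pi) ∧ Real.cos (m₂*s) = 0} := by
  ext s
  simp only [Sset, Set.mem_setOf_eq]
  refine and_congr_right fun _ => ?_
  rw [rho_eq_iff' m₁ m₂ α s t]
  constructor
  · rintro (⟨⟨a, ha⟩, ⟨b, hb⟩⟩ | ⟨⟨a, ha⟩, ⟨b, hb⟩⟩ | h)
    · rw [pr] at ha; rw [qr] at hb
      have hms : (m₂:ℝ)*s = ((a - b : ℤ):ℝ)*Real.pi + (m₂:ℝ)*t := by
        push_cast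
        linear_combination ha/2 - hb/2
      rw [hms]
      exact cos_zero_add_int_pi hc _
    · rw [pr, qr] at ha hb
      have hc' : Real.cos (-((m₂:ℝ)*t)) = 0 := by rw [Real.cos_neg]; exact hc
      have hms : (m₂:ℝ)*s = ((a - b : ℤ):ℝ)*Real.pi + -((m₂:ℝ)*t) := by
        push_cast
        linear_combination ha/2 - hb/2
      rw [hms]
      exact cos_zero_add_int_pi hc' _
    · exact h.1
  · intro h
    exact Or.inr (Or.inr ⟨h, hc⟩)

lemma origin_count (hm₂ : 0 < m₂) :
    {s : ℝ | s ∈ Set.Ico (0:ℝ) (2*Real.pi) ∧ Real.cos (m₂*s) = 0}.ncard = 2*m₂ := by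
  have hm₂R : (0:ℝ) < (m₂:ℝ) := by exact_mod_cast hm₂
  have hden : (0:ℝ) < 2*(m₂:ℝ) := by positivity
  have hkey : {s : ℝ | s ∈ Set.Ico (0:ℝ) (2*Real.pi) ∧ Real.cos (m₂*s) = 0}
      = ↑((Finset.range (2*m₂)).image (fun k : ℕ => (2*(k:ℝ)+1)*Real.pi/(2*(m₂:ℝ)))) := by
    ext s
    simp only [Set.mem_setOf_eq, Finset.coe_image, Set.mem_image, Finset.mem_coe,
      Finset.mem_range, Set.mem_Ico]
    constructor
    · rintro ⟨⟨hs0, hs2⟩, hcos⟩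
      obtain ⟨k, hk⟩ := Real.cos_eq_zero_iff.1 hcos
      have hs : s = (2*(k:ℝ)+1)*Real.pi/(2*(m₂:ℝ)) := by
        rw [eq_div_iff (ne_of_gt hden)]
        linear_combination 2*hk
      have hppos := Real.pi_pos
      have hk0 : 0 ≤ k := by
        by_contra hneg
        push_neg at hneg
        have hk1 : (k:ℤ) ≤ -1 := by omega
        have hkR : (k:ℝ) ≤ -1 := by exact_mod_cast hk1
        rw [hs] at hs0
        rw [le_div_iff₀ hden] at hs0
        nlinarith
      have hklt : k < 2*(m₂:ℤ) := by
        by_contra hge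
        push_neg at hge
        have hkR : 2*(m₂:ℝ) ≤ (k:ℝ) := by exact_mod_cast hge
        rw [hs, div_lt_iff₀ hden] at hs2
        nlinarith
      refine ⟨k.toNat, ?_, ?_⟩
      · omega
      · have hcast : ((k.toNat:ℕ):ℝ) = (k:ℝ) := by exact_mod_cast Int.toNat_of_nonneg hk0
        rw [hs, ← hcast]
    · rintro ⟨k, hk, rfl⟩
      have hppos := Real.pi_pos
      have hkR : (k:ℝ) < 2*(m₂:ℝ) := by exact_mod_cast hk
      refine ⟨⟨by positivity, ?_⟩, ?_⟩
      · rw [div_lt_iff₀ hden]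
        have hkR' : (k:ℝ) + 1 ≤ 2*(m₂:ℝ) := by exact_mod_cast hk
        nlinarith
      · refine Real.cos_eq_zero_iff.2 ⟨(k:ℤ), ?_⟩
        push_cast
        field_simp
  rw [hkey, Set.ncard_coe_finset]
  rw [Finset.card_image_of_injective _ ?_, Finset.card_range]
  intro k k' h
  simp only at h
  rw [mul_div_assoc, mul_div_assoc] at h
  have h3 : (2*(k:ℝ)+1) = 2*(k':ℝ)+1 :=
    mul_right_cancel₀ (ne_of_gt (div_pos Real.pi_pos hden)) h
  have h4 : 2*k+1 = 2*k'+1 := by exact_mod_cast h3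
  omega

lemma tSample_mem (hm₁ : 0 < m₁) (hm₂ : 0 < m₂) {l : ℕ} (hl : l < 4*m₁*m₂) :
    tSample m₁ m₂ l ∈ Set.Ico (0:ℝ) (2*Real.pi) := by
  have hm₁R : (0:ℝ) < (m₁:ℝ) := by exact_mod_cast hm₁
  have hm₂R : (0:ℝ) < (m₂:ℝ) := by exact_mod_cast hm₂
  have hppos := Real.pi_pos
  rw [tSample]
  constructor
  · positivity
  · rw [div_lt_iff₀ (by positivity)]
    have hlR : (l:ℝ) + 1 ≤ 4*(m₁:ℝ)*m₂ := by exact_mod_cast hl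
    nlinarith

lemma tSample_sample (hm₁ : 0 < m₁) (hm₂ : 0 < m₂) (l : ℕ) :
    2*(m₁:ℝ)*m₂*(tSample m₁ m₂ l) = (l:ℝ)*Real.pi := by
  have hm₁R : (0:ℝ) < (m₁:ℝ) := by exact_mod_cast hm₁
  have hm₂R : (0:ℝ) < (m₂:ℝ) := by exact_mod_cast hm₂
  rw [tSample]
  field_simp

end SetChar
end Rh

open Rh

/-- Proposition 2.1 (case `m₁ + m₂` odd): minimal period `2π` and cardinalities of
`S^{(m)}(t)` for `t ∈ [0, 2π)`. -/
theorem rhodonea_intersections_odd (m₁ m₂ : ℕ) (hm₁ : 0 < m₁) (hm₂ : 0 < m₂)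
    (hcop : Nat.Coprime m₁ m₂) (hodd : Odd (m₁ + m₂)) (α : ℝ) :
    (Function.Periodic (rho m₁ m₂ α) (2 * Real.pi) ∧
      ∀ q : ℝ, 0 < q → q < 2 * Real.pi → ¬ Function.Periodic (rho m₁ m₂ α) q) ∧
    (∀ l : ℕ, l < 4 * m₁ * m₂ → l ≡ m₁ [MOD 2 * m₁] →
      (Sset m₁ m₂ α (tSample m₁ m₂ l)).ncard = 2 * m₂) ∧
    (∀ l : ℕ, l < 4 * m₁ * m₂ → ¬ l ≡ 0 [MOD m₁] →
      (Sset m₁ m₂ α (tSample m₁ m₂ l)).ncard = 2) ∧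
    (∀ t : ℝ, t ∈ Set.Ico (0 : ℝ) (2 * Real.pi) →
      ¬ (∃ l : ℕ, l < 4 * m₁ * m₂ ∧ t = tSample m₁ m₂ l ∧
          (l ≡ m₁ [MOD 2 * m₁] ∨ ¬ l ≡ 0 [MOD m₁])) →
      (Sset m₁ m₂ α t).ncard = 1) := by
  have hm₁R : (0:ℝ) < (m₁:ℝ) := by exact_mod_cast hm₁
  have hm₂R : (0:ℝ) < (m₂:ℝ) := by exact_mod_cast hm₂
  have hppos := Real.pi_pos
  -- general one-point lemma packaged
  have Sone : ∀ t : ℝ, t ∈ Set.Ico (0:ℝ) (2*Real.pi) → Real.cos (m₂*t) ≠ 0 →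
      (∀ s, E2 m₁ m₂ s t → ceq s t) → (Sset m₁ m₂ α t).ncard = 1 := by
    intro t ht hc hE2
    rw [S_one m₁ m₂ hm₁ hcop hodd α ht hc hE2, Set.ncard_singleton]
  refine ⟨⟨?_, ?_⟩, ?_, ?_, ?_⟩
  · -- periodicity
    intro x
    have h1 : Real.cos ((m₂:ℝ)*(x+2*Real.pi)) = Real.cos ((m₂:ℝ)*x) := by
      rw [show (m₂:ℝ)*(x+2*Real.pi) = (m₂:ℝ)*x + ((m₂:ℤ):ℝ)*(2*Real.pi) by push_cast; ring,
        Real.cos_add_int_mul_two_pi]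
    have h2 : Real.cos ((m₁:ℝ)*(x+2*Real.pi) - α*Real.pi)
        = Real.cos ((m₁:ℝ)*x - α*Real.pi) := by
      rw [show (m₁:ℝ)*(x+2*Real.pi) - α*Real.pi
          = ((m₁:ℝ)*x - α*Real.pi) + ((m₁:ℤ):ℝ)*(2*Real.pi) by push_cast; ring,
        Real.cos_add_int_mul_two_pi]
    have h3 : Real.sin ((m₁:ℝ)*(x+2*Real.pi) - α*Real.pi)
        = Real.sin ((m₁:ℝ)*x - α*Real.pi) := by
      rw [show (m₁:ℝ)*(x+2*Real.pi) - α*Real.pi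
          = ((m₁:ℝ)*x - α*Real.pi) + ((m₁:ℤ):ℝ)*(2*Real.pi) by push_cast; ring,
        Real.sin_add_int_mul_two_pi]
    simp only [rho, h1, h2, h3]
  · -- minimality
    intro q hq0 hq2 hper
    have h00 : Sset m₁ m₂ α 0 = {(0:ℝ)} := by
      refine S_one m₁ m₂ hm₁ hcop hodd α ⟨le_refl _, Real.two_pi_pos⟩ (by simp) ?_
      intro s hs
      refine E2_unique m₁ m₂ hm₁ hcop hodd hs ⟨?_, ?_⟩
      · rw [mul_zero, mul_zero]; exact ceq_refl 0
      · rw [mul_zero, mul_zero]; exact ceq_refl 0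
    have hq : q ∈ Sset m₁ m₂ α 0 := by
      refine ⟨⟨le_of_lt hq0, hq2⟩, ?_⟩
      have := hper 0
      rwa [zero_add] at this
    rw [h00] at hq
    exact (ne_of_gt hq0) hq

  · -- case (i)
    intro l hl hmod
    have hcos : Real.cos (m₂ * tSample m₁ m₂ l) = 0 := by
      obtain ⟨j, hj⟩ := hmod.dvd
      have hk : (l:ℤ) = (m₁:ℤ)*(2*(-j)+1) := by push_cast at hj ⊢; linarith
      refine Real.cos_eq_zero_iff.2 ⟨-j, ?_⟩
      have hkR : (l:ℝ) = (m₁:ℝ)*(2*((-j:ℤ):ℝ)+1) := by exact_mod_cast hk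
      rw [tSample, mul_div_assoc]
      rw [hkR]
      field_simp
    rw [S_origin m₁ m₂ α hcos]
    exact origin_count m₂ hm₂
  · -- case (ii)
    intro l hl hmod
    have ht := tSample_mem m₁ m₂ hm₁ hm₂ hl
    have hsamp := tSample_sample m₁ m₂ hm₁ hm₂ l
    have hndvd : ¬ ((m₁:ℤ) ∣ (l:ℤ)) := by
      intro hdvd
      exact hmod ((Nat.modEq_zero_iff_dvd).2 (Int.ofNat_dvd.1 hdvd))
    have hc : Real.cos (m₂ * tSample m₁ m₂ l) ≠ 0 := by
      intro h0
      obtain ⟨k, hk⟩ := Real.cos_eq_zero_iff.1 h0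
      have hR : (l:ℝ)*Real.pi = ((m₁:ℤ)*(2*k+1) : ℤ)*Real.pi := by
        push_cast
        linear_combination (-1 : ℝ)*hsamp + 2*(m₁:ℝ)*hk
      have hZ : (l:ℤ) = (m₁:ℤ)*(2*k+1) := by
        have := mul_right_cancel₀ Real.pi_ne_zero hR
        exact_mod_cast this
      exact hndvd ⟨2*k+1, hZ⟩
    have hnd : ¬ ceq (pr m₁ m₂ * tSample m₁ m₂ l) (qr m₁ m₂ * tSample m₁ m₂ l) := by
      rintro ⟨k, hk⟩
      rw [pr, qr] at hk
      have hR : (l:ℝ)*Real.pi = ((m₁:ℤ)*(2*k) : ℤ)*Real.pi := by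
        push_cast
        linear_combination (-1 : ℝ)*hsamp + (m₁:ℝ)*hk
      have hZ : (l:ℤ) = (m₁:ℤ)*(2*k) := by
        have := mul_right_cancel₀ Real.pi_ne_zero hR
        exact_mod_cast this
      exact hndvd ⟨2*k, hZ⟩
    obtain ⟨s₀, hs₀⟩ := E2_exists m₁ m₂ hcop hodd (l := (l:ℤ))
      (by push_cast; exact hsamp)
    obtain ⟨hSeq, hne⟩ := S_two m₁ m₂ hm₁ hcop hodd α ht hc hs₀ hnd
    rw [hSeq, Set.ncard_pair hne]
  · -- case (iii)
    intro t ht hne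
    by_cases hs : ∃ c : ℤ, 2*(m₁:ℝ)*m₂*t = c*Real.pi
    · obtain ⟨c, hcπ⟩ := hs
      have hc0 : 0 ≤ c := by
        have h1 : (0:ℝ) ≤ (c:ℝ)*Real.pi := by
          rw [← hcπ]
          have := ht.1
          positivity
        have : (0:ℝ) ≤ (c:ℝ) := by nlinarith
        exact_mod_cast this
      have hclt : c < 4*(m₁:ℤ)*m₂ := by
        have h2 := mul_lt_mul_of_pos_left ht.2 (show (0:ℝ) < 2*(m₁:ℝ)*m₂ by positivity)
        rw [hcπ] at h2
        have h3 : (c:ℝ) < 4*(m₁:ℝ)*m₂ := by nlinarith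
        exact_mod_cast h3
      set l := c.toNat with hldef
      have hlc : (l:ℤ) = c := Int.toNat_of_nonneg hc0
      have hlcR : (l:ℝ) = (c:ℝ) := by exact_mod_cast hlc
      have hl4 : l < 4*m₁*m₂ := by
        have hz : (l:ℤ) < 4*(m₁:ℤ)*m₂ := by rw [hlc]; exact hclt
        exact_mod_cast hz
      have hteq : t = tSample m₁ m₂ l := by
        rw [tSample, eq_div_iff (by positivity), hlcR]
        linear_combination hcπ
      push_neg at hne
      have hno := hne l hl4 hteq
      have h1 : ¬ l ≡ m₁ [MOD 2*m₁] := hno.1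
      have h2 : l ≡ 0 [MOD m₁] := hno.2
      obtain ⟨j, hj⟩ := (Nat.modEq_zero_iff_dvd).1 h2
      have hjeven : ∃ j' : ℕ, j = 2*j' := by
        rcases Nat.even_or_odd j with he | ho
        · obtain ⟨r, hr⟩ := he
          exact ⟨r, by omega⟩
        · exfalso
          obtain ⟨j', hj'⟩ := ho
          apply h1
          have hle : m₁ ≤ l := by
            rw [hj, hj']
            exact Nat.le_mul_of_pos_right m₁ (by omega)
          refine ((Nat.modEq_iff_dvd' hle).2 ⟨j', ?_⟩).symm
          rw [hj, hj', Nat.mul_add, Nat.mul_one, Nat.add_sub_cancel]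
          ring
      obtain ⟨j', hj'⟩ := hjeven
      have hlval : l = 2*m₁*j' := by rw [hj, hj']; ring
      have hlR : (l:ℝ) = 2*(m₁:ℝ)*j' := by exact_mod_cast hlval
      have hsamp := tSample_sample m₁ m₂ hm₁ hm₂ l
      rw [← hteq] at hsamp
      have hm2t : (m₂:ℝ)*t = (j':ℝ)*Real.pi := by
        have hR : 2*(m₁:ℝ)*((m₂:ℝ)*t) = 2*(m₁:ℝ)*((j':ℝ)*Real.pi) := by
          rw [show 2*(m₁:ℝ)*((m₂:ℝ)*t) = 2*(m₁:ℝ)*m₂*t by ring, hsamp, hlR]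
          ring
        exact mul_left_cancel₀ (by positivity) hR
      have hdeg : ceq (pr m₁ m₂ * t) (qr m₁ m₂ * t) := by
        refine ⟨j', ?_⟩
        rw [pr, qr]
        linear_combination 2*hm2t
      have hcnz : Real.cos (m₂*t) ≠ 0 := by
        intro h0
        obtain ⟨k, hk⟩ := Real.cos_eq_zero_iff.1 h0
        rw [hm2t] at hk
        have : 2*(j':ℝ) = 2*(k:ℝ)+1 := by
          have := mul_right_cancel₀ Real.pi_ne_zero
            (show (2*(j':ℝ))*Real.pi = (2*(k:ℝ)+1)*Real.pi by linear_combination 2*hk)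
          exact this
        have hZ : 2*(j':ℤ) = 2*k+1 := by exact_mod_cast this
        omega
      refine Sone t ht hcnz ?_
      intro s hsE2
      exact E2_unique m₁ m₂ hm₁ hcop hodd hsE2 ⟨hdeg, ceq_symm hdeg⟩
    · have hcnz : Real.cos (m₂*t) ≠ 0 := by
        intro h0
        obtain ⟨k, hk⟩ := Real.cos_eq_zero_iff.1 h0
        exact hs ⟨(m₁:ℤ)*(2*k+1), by push_cast; linear_combination 2*(m₁:ℝ)*hk⟩
      refine Sone t ht hcnz ?_
      intro s hsE2
      exact absurd (E2_necessary m₁ m₂ hsE2) hs
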